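/- Let e₁, e₂ ∈ H satisfy B(e₁, e₂) = 0 and Q(e₁) ≠ 0, Q(e₂) ≠ 0, and set a = ι(e₁)·ι(e₂) ∈ C. Then the bilinear form σ_a on C defined by σ_a(x, y) = Tr(L_{x·a·ȳ}) is alternating (σ_a(x, y) = −σ_a(y, x) for all x, y ∈ C) and nondegenerate (for every x ∈ C with x ≠ 0 there exists y ∈ C with σ_a(x, y) ≠ 0). -/

import Mathlib

open CliffordAlgebra

/-- The bilinear form `σ_a(x, y) = Tr (L_{x · a · ȳ})` on the Clifford algebra,
where `ȳ = involute (reverse y)` and `L_w` is left multiplication by `w`. -/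
noncomputable def sigmaForm
    {k : Type*} [Field k]
    {H : Type*} [AddCommGroup H] [Module k H]
    (Q : QuadraticForm k H) (a x y : CliffordAlgebra Q) : k :=
  LinearMap.trace k (CliffordAlgebra Q)
    (LinearMap.mulLeft k (x * a * involute (reverse y)))

namespace SigmaFormAux

variable {k : Type*} [Field k] {H : Type*} [AddCommGroup H] [Module k H]
variable (Q : QuadraticForm k H) {n : ℕ} (v : Fin n → H)

noncomputable def mon (l : List (Fin n)) : CliffordAlgebra Q :=
  (l.map fun i => ι Q (v i)).prod

@[simp] lemma mon_nil : mon Q v ([] : List (Fin n)) = 1 := rfl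

@[simp] lemma mon_cons (i : Fin n) (l : List (Fin n)) :
    mon Q v (i :: l) = ι Q (v i) * mon Q v l := by simp [mon]

lemma mon_append (l₁ l₂ : List (Fin n)) :
    mon Q v (l₁ ++ l₂) = mon Q v l₁ * mon Q v l₂ := by
  simp [mon]

variable {Q v}

section
variable (ho : ∀ i j : Fin n, i ≠ j → QuadraticMap.polar Q (v i) (v j) = 0)
include ho

lemma anti {i j : Fin n} (h : i ≠ j) :
    ι Q (v i) * ι Q (v j) = -(ι Q (v j) * ι Q (v i)) := by
  have := ι_mul_ι_add_swap (Q := Q) (v i) (v j)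
  rw [ho i j h, map_zero] at this
  exact eq_neg_of_add_eq_zero_left this

lemma mon_mul_ι (l : List (Fin n)) (j : Fin n) (hj : j ∉ l) :
    mon Q v l * ι Q (v j) = ((-1 : k) ^ l.length) • (ι Q (v j) * mon Q v l) := by
  induction l with
  | nil => simp
  | cons h t ih =>
    have hjh : j ≠ h := fun e => hj (e ▸ List.mem_cons_self)
    have hjt : j ∉ t := fun e => hj (List.mem_cons_of_mem _ e)
    rw [mon_cons, mul_assoc, ih hjt, mul_smul_comm, ← mul_assoc,
      anti ho hjh.symm]
    simp only [List.length_cons, pow_succ]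
    rw [neg_mul, mul_assoc]
    simp [smul_smul, mul_comm]

end

variable {k : Type*} [Field k] {H : Type*} [AddCommGroup H] [Module k H]
variable {Q : QuadraticForm k H} {n : ℕ} {v : Fin n → H}

section
variable (ho : ∀ i j : Fin n, i ≠ j → QuadraticMap.polar Q (v i) (v j) = 0)
include ho

lemma mon_mul_self (hQv : ∀ i, Q (v i) ≠ 0) (l : List (Fin n)) (hl : l.Nodup) :
    ∃ c : k, c ≠ 0 ∧ mon Q v l * mon Q v l = algebraMap k _ c := by
  induction l with
  | nil => exact ⟨1, one_ne_zero, by simp⟩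
  | cons h t ih =>
    obtain ⟨ht, hnd⟩ := List.nodup_cons.mp hl
    obtain ⟨c, hc, hcc⟩ := ih hnd
    refine ⟨(-1 : k) ^ t.length * (Q (v h) * c), by
      simp [hc, hQv h], ?_⟩
    rw [mon_cons, mul_assoc, ← mul_assoc (mon Q v t), mon_mul_ι ho t h ht,
      smul_mul_assoc, mul_smul_comm, ← mul_assoc, ← mul_assoc, ι_sq_scalar,
      mul_assoc, hcc, ← map_mul, Algebra.smul_def, ← map_mul]

lemma mon_perm {l l' : List (Fin n)} (hl : l.Nodup) (hp : l.Perm l') :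
    mon Q v l' = mon Q v l ∨ mon Q v l' = -(mon Q v l) := by
  induction hp with
  | nil => exact Or.inl rfl
  | cons x _ ih =>
    rcases ih (List.nodup_cons.mp hl).2 with h | h <;>
      simp [mon_cons, h, Or.inl, Or.inr]
  | swap x y t =>
    have hxy : y ≠ x := by
      intro e; subst e
      exact (List.nodup_cons.mp hl).1 (List.mem_cons_self)
    right
    simp only [mon_cons, ← mul_assoc]
    rw [anti ho hxy]
    simp
  | trans p₁ p₂ ih₁ ih₂ =>
    rcases ih₁ hl with h | h <;> rcases ih₂ (hl.perm p₁) with h' | h' <;>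
      simp [h, h', Or.inl, Or.inr]

omit ho in
lemma reverse_mon (l : List (Fin n)) :
    reverse (mon Q v l) = mon Q v l.reverse := by
  induction l with
  | nil => simp [reverse.map_one]
  | cons h t ih =>
    rw [mon_cons, reverse.map_mul, reverse_ι, ih, List.reverse_cons, mon_append]
    simp

omit ho in
lemma involute_mon (l : List (Fin n)) :
    involute (mon Q v l) = mon Q v l ∨ involute (mon Q v l) = -(mon Q v l) := by
  induction l with
  | nil => simp
  | cons h t ih =>
    rcases ih with h' | h' <;> simp [mon_cons, h', Or.inl, Or.inr]

lemma phi_mon (l : List (Fin n)) (hl : l.Nodup) :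
    involute (reverse (mon Q v l)) = mon Q v l ∨
      involute (reverse (mon Q v l)) = -(mon Q v l) := by
  rw [reverse_mon]
  rcases mon_perm ho hl (List.reverse_perm l).symm with h | h
  · rw [h]; exact involute_mon l
  · rw [h, map_neg]
    rcases involute_mon (Q := Q) (v := v) l with h' | h'
    · rw [h']; right; rfl
    · rw [h', neg_neg]; left; rfl

end

lemma sigma_mon (σ : CliffordAlgebra Q →ₐ[k] CliffordAlgebra Q) (i : Fin n)
    (hσ : ∀ j, σ (ι Q (v j)) = if j = i then -(ι Q (v j)) else ι Q (v j))
    (L : List (Fin n)) :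
    σ (mon Q v L) = ((-1 : k) ^ (L.count i)) • mon Q v L := by
  induction L with
  | nil => simp
  | cons h t ih =>
    rw [mon_cons, map_mul, ih, hσ h, List.count_cons]
    by_cases hhi : h = i
    · simp [hhi, pow_succ, mul_smul_comm, smul_smul, mul_comm]
    · simp [hhi, mul_smul_comm]



section Span
variable (ho : ∀ i j : Fin n, i ≠ j → QuadraticMap.polar Q (v i) (v j) = 0)
include ho

lemma spanA (j : Fin n) (l : List (Fin n)) (hl : l.Pairwise (· < ·)) :
    ι Q (v j) * mon Q v l ∈ Submodule.span k
      {x | ∃ l' : List (Fin n), l'.Pairwise (· < ·) ∧ (∀ i ∈ l', i = j ∨ i ∈ l) ∧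
        x = mon Q v l'} := by
  induction l generalizing j with
  | nil =>
    apply Submodule.subset_span
    exact ⟨[j], by simp, by simp, by simp⟩
  | cons h t ih =>
    have hht : ∀ i ∈ t, h < i := fun i hi => (List.pairwise_cons.mp hl).1 i hi
    have hts : t.Pairwise (· < ·) := (List.pairwise_cons.mp hl).2
    rcases lt_trichotomy j h with hj | rfl | hj
    · apply Submodule.subset_span
      refine ⟨j :: h :: t, ?_, fun i hi => ?_, by simp⟩
      · exact List.pairwise_cons.mpr ⟨fun b hb => by
          rcases List.mem_cons.mp hb with rfl | hb
          · exact hj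
          · exact hj.trans (hht _ hb), hl⟩
      · rcases List.mem_cons.mp hi with rfl | hi
        · exact Or.inl rfl
        · exact Or.inr hi
    · rw [mon_cons, ← mul_assoc, ι_sq_scalar, ← Algebra.smul_def]
      exact Submodule.smul_mem _ _ (Submodule.subset_span
        ⟨t, hts, fun i hi => Or.inr (List.mem_cons_of_mem _ hi), rfl⟩)
    · rw [mon_cons, ← mul_assoc, anti ho (ne_of_gt hj), neg_mul, mul_assoc]
      apply Submodule.neg_mem
      refine Submodule.span_induction
        (p := fun x _ => ι Q (v h) * x ∈ Submodule.span k
          {x | ∃ l' : List (Fin n), l'.Pairwise (· < ·) ∧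
            (∀ i ∈ l', i = j ∨ i ∈ h :: t) ∧ x = mon Q v l'})
        ?_ ?_ ?_ ?_ (ih j hts)
      · rintro x ⟨l', hl', hsub, rfl⟩
        apply Submodule.subset_span
        have hgt : ∀ i ∈ l', h < i := fun i hi => by
          rcases hsub i hi with rfl | hi'
          · exact hj
          · exact hht _ hi'
        refine ⟨h :: l', List.pairwise_cons.mpr ⟨hgt, hl'⟩, fun i hi => ?_, by simp⟩
        rcases List.mem_cons.mp hi with rfl | hi'
        · exact Or.inr (List.mem_cons_self)
        · rcases hsub i hi' with rfl | hi''
          · exact Or.inl rfl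
          · exact Or.inr (List.mem_cons_of_mem _ hi'')
      · simp
      · intro x y _ _ hx hy
        rw [mul_add]
        exact Submodule.add_mem _ hx hy
      · intro c x _ hx
        rw [mul_smul_comm]
        exact Submodule.smul_mem _ _ hx

lemma span_top (b : Module.Basis (Fin n) k H) (hb : ⇑b = v) :
    Submodule.span k (Set.range fun S : Finset (Fin n) =>
      mon Q v (S.sort (· ≤ ·))) = ⊤ := by
  set W := Submodule.span k (Set.range fun S : Finset (Fin n) =>
      mon Q v (S.sort (· ≤ ·))) with hW
  have hsorted : ∀ l : List (Fin n), l.Pairwise (· < ·) → mon Q v l ∈ W := by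
    intro l hl
    apply Submodule.subset_span
    exact ⟨l.toFinset, by simp only []; rw [(List.toFinset_sort (· ≤ ·) hl.nodup).mpr (hl.imp (fun h => le_of_lt h))]⟩
  have hι : ∀ (j : Fin n) (u : CliffordAlgebra Q), u ∈ W → ι Q (v j) * u ∈ W := by
    intro j u hu
    refine Submodule.span_induction (p := fun x _ => ι Q (v j) * x ∈ W) ?_ ?_ ?_ ?_ hu
    · rintro x ⟨S, rfl⟩
      refine Submodule.span_le.mpr ?_ (spanA ho j (S.sort (· ≤ ·)) (Finset.sortedLT_sort S).pairwise)
      rintro x ⟨l', hl', _, rfl⟩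
      exact hsorted l' hl'
    · simp
    · intro x y _ _ hx hy; rw [mul_add]; exact Submodule.add_mem _ hx hy
    · intro c x _ hx; rw [mul_smul_comm]; exact Submodule.smul_mem _ _ hx
  have hmul : ∀ w : CliffordAlgebra Q, ∀ u ∈ W, w * u ∈ W := by
    intro w
    induction w using CliffordAlgebra.induction with
    | algebraMap r => intro u hu; rw [← Algebra.smul_def]; exact Submodule.smul_mem _ _ hu
    | ι x =>
      intro u hu
      have hle : Submodule.span k (Set.range v) ≤
          Submodule.comap ((LinearMap.mulRight k u).comp (ι Q)) W := by
        rw [Submodule.span_le]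
        rintro _ ⟨j, rfl⟩
        exact hι j u hu
      have hxmem : x ∈ Submodule.span k (Set.range v) := by
        rw [← hb, b.span_eq]; trivial
      simpa using hle hxmem
    | mul a c iha ihc => intro u hu; rw [mul_assoc]; exact iha _ (ihc _ hu)
    | add a c iha ihc => intro u hu; rw [add_mul]; exact Submodule.add_mem _ (iha _ hu) (ihc _ hu)
  rw [eq_top_iff]
  intro w _
  have h1 : (1 : CliffordAlgebra Q) ∈ W := hsorted [] (by simp)
  simpa using hmul w 1 h1

end Span

section Sigma

lemma exists_sigma (B : LinearMap.BilinForm k H) (hBQ : ∀ x, B x x = Q x)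
    (b : Module.Basis (Fin n) k H) (hb : ⇑b = v)
    (horth : ∀ i j : Fin n, i ≠ j → B (v i) (v j) = 0) :
    ∃ σ : Fin n → (CliffordAlgebra Q →ₐ[k] CliffordAlgebra Q),
      (∀ i w, σ i (σ i w) = w) ∧
      (∀ i j, σ i (ι Q (v j)) = if j = i then -(ι Q (v j)) else ι Q (v j)) := by
  classical
  have hveq : ∀ j, b j = v j := fun j => congrFun hb j
  -- the reflection linear maps
  set g : Fin n → Fin n → H := fun i j => if j = i then -(v j) else v j with hg
  set f : Fin n → (H →ₗ[k] H) := fun i => b.constr k (g i) with hf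
  have hfb : ∀ i j, f i (b j) = g i j := fun i j => b.constr_basis k (g i) j
  have hBg : ∀ i j j', B (g i j) (g i j') = B (b j) (b j') := by
    intro i j j'
    rcases eq_or_ne j j' with rfl | hjj
    · by_cases hji : j = i <;> simp [hg, hji, hveq]
    · have h0 : B (b j) (b j') = 0 := by rw [hveq, hveq]; exact horth _ _ hjj
      rcases eq_or_ne j i with rfl | hji
      · simp [hg, if_pos rfl, if_neg (show ¬ j' = j from fun e => hjj e.symm),
          ← hveq, h0, map_neg, LinearMap.neg_apply]
      · rcases eq_or_ne j' i with rfl | hj'i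
        · simp [hg, if_neg hji, if_pos rfl, ← hveq, h0, map_neg, LinearMap.neg_apply]
        · simp [hg, if_neg hji, if_neg hj'i, ← hveq, h0]
  have hQf : ∀ i x, Q (f i x) = Q x := by
    intro i x
    have hx : ∑ j, b.repr x j • b j = x := b.sum_repr x
    have hfx : f i x = ∑ j, b.repr x j • g i j := by
      rw [← hx, map_sum]
      simp [hfb, hx]
    rw [← hBQ, ← hBQ, hfx]
    conv_rhs => rw [← hx]
    simp only [map_sum, map_smul, LinearMap.sum_apply, LinearMap.smul_apply,
      smul_eq_mul]
    refine Finset.sum_congr rfl fun j _ => ?_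
    exact congrArg (fun t => b.repr x j * t)
      (Finset.sum_congr rfl fun j' _ => by rw [hBg])
  have hff : ∀ i x, f i (f i x) = x := by
    intro i x
    have : (f i).comp (f i) = LinearMap.id := by
      refine b.ext fun j => ?_
      rw [LinearMap.comp_apply, hfb]
      by_cases hji : j = i <;>
        simp [hg, hji, ← hveq, hfb, LinearMap.id_apply]
    calc f i (f i x) = ((f i).comp (f i)) x := rfl
    _ = x := by rw [this]; rfl
  set σ : Fin n → (CliffordAlgebra Q →ₐ[k] CliffordAlgebra Q) :=
    fun i => CliffordAlgebra.map ⟨f i, hQf i⟩ with hσ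
  have hσι : ∀ i (x : H), σ i (ι Q x) = ι Q (f i x) := fun i x =>
    CliffordAlgebra.map_apply_ι _ _
  refine ⟨σ, fun i w => ?_, fun i j => ?_⟩
  · have : (σ i).comp (σ i) = AlgHom.id k _ := by
      apply CliffordAlgebra.hom_ext
      apply LinearMap.ext fun x => ?_
      simp [hσι, hff]
    calc σ i (σ i w) = ((σ i).comp (σ i)) w := rfl
    _ = w := by rw [this]; rfl
  · rw [hσι, ← hveq, hfb]
    by_cases hji : j = i <;> simp [hg, hji, hveq]

end Sigma

section Trace
variable [Module.Finite k (CliffordAlgebra Q)]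

omit [Module.Finite k (CliffordAlgebra Q)] in
lemma mulLeft_eq_mul (w : CliffordAlgebra Q) :
    LinearMap.mulLeft k w = LinearMap.mul k (CliffordAlgebra Q) w := by
  ext c
  rw [LinearMap.mulLeft_apply, LinearMap.mul_apply']

lemma trace_conj_auto (σ : CliffordAlgebra Q →ₐ[k] CliffordAlgebra Q)
    (hσ : ∀ w, σ (σ w) = w) (w : CliffordAlgebra Q) :
    LinearMap.trace k _ (LinearMap.mulLeft k (σ w)) =
      LinearMap.trace k _ (LinearMap.mulLeft k w) := by
  have h1 : LinearMap.mulLeft k (σ w) =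
      (σ.toLinearMap.comp (LinearMap.mulLeft k w)).comp σ.toLinearMap := by
    ext c
    simp only [LinearMap.mulLeft_apply, LinearMap.comp_apply, AlgHom.toLinearMap_apply,
      map_mul, hσ]
  have h2 : σ.toLinearMap.comp σ.toLinearMap = LinearMap.id := by
    ext c; simp [hσ]
  rw [h1, LinearMap.comp_assoc, LinearMap.trace_comp_comm', LinearMap.comp_assoc,
    h2, LinearMap.comp_id]

end Trace

end SigmaFormAux


open SigmaFormAux in
/-- Let `e₁, e₂ ∈ H` satisfy `B(e₁, e₂) = 0`, `Q e₁ ≠ 0`, `Q e₂ ≠ 0`, and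
set `a = ι(e₁)·ι(e₂) ∈ C`.  Then the form `σ_a(x, y) = Tr (L_{x·a·ȳ})` on `C` is
alternating and nondegenerate. -/
theorem sigmaForm_alternating_nondegenerate
    {k : Type*} [Field k] [CharZero k]
    {H : Type*} [AddCommGroup H] [Module k H] [FiniteDimensional k H]
    (Q : QuadraticForm k H)
    (B : LinearMap.BilinForm k H)
    (hBQ : ∀ x, B x x = Q x)
    (hBsymm : ∀ x y, B x y = B y x)
    (hBnd : LinearMap.BilinForm.Nondegenerate B)
    (e₁ e₂ : H) (h12 : B e₁ e₂ = 0) (h1 : Q e₁ ≠ 0) (h2 : Q e₂ ≠ 0) :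
    (∀ x y : CliffordAlgebra Q,
        sigmaForm Q (ι Q e₁ * ι Q e₂) x y = - sigmaForm Q (ι Q e₁ * ι Q e₂) y x) ∧
    (∀ x : CliffordAlgebra Q, x ≠ 0 →
        ∃ y : CliffordAlgebra Q, sigmaForm Q (ι Q e₁ * ι Q e₂) x y ≠ 0) := by
  classical
  haveI : Invertible (2 : k) := invertibleOfNonzero two_ne_zero
  have hsymm : LinearMap.IsSymm B := LinearMap.BilinForm.isSymm_iff.mp ⟨fun x y => hBsymm x y⟩
  obtain ⟨b, hbo⟩ := LinearMap.BilinForm.exists_orthogonal_basis hsymm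
  set v : Fin (Module.finrank k H) → H := ⇑b with hv
  have horthB : ∀ i j, i ≠ j → B (v i) (v j) = 0 :=
    (LinearMap.isOrthoᵢ_def.mp hbo)
  have hpolar : ∀ x y : H, QuadraticMap.polar Q x y = B x y + B y x := by
    intro x y
    simp only [QuadraticMap.polar, ← hBQ, map_add, LinearMap.add_apply]
    ring
  have ho : ∀ i j, i ≠ j → QuadraticMap.polar Q (v i) (v j) = 0 := by
    intro i j hij
    rw [hpolar, horthB i j hij, horthB j i hij.symm, add_zero]
  have hQv : ∀ i, Q (v i) ≠ 0 := by
    intro i h0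
    have hBv : ∀ y, B (v i) y = 0 := by
      intro y
      have hy : y ∈ Submodule.span k (Set.range ⇑b) := by rw [b.span_eq]; trivial
      have hle : Submodule.span k (Set.range ⇑b) ≤ LinearMap.ker (B (v i)) := by
        rw [Submodule.span_le]
        rintro _ ⟨j, rfl⟩
        rcases eq_or_ne i j with rfl | hij
        · exact (hBQ (v i)).trans h0
        · exact horthB i j hij
      exact hle hy
    exact b.ne_zero i (hBnd.1 _ hBv)
  have hspan := span_top (Q := Q) (v := v) ho b rfl
  haveI hfin : Module.Finite k (CliffordAlgebra Q) := by
    rw [Module.finite_def, Submodule.fg_def]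
    exact ⟨Set.range fun S : Finset (Fin (Module.finrank k H)) => mon Q v (S.sort (· ≤ ·)),
      Set.finite_range _, hspan⟩
  obtain ⟨σ, hσσ, hσι⟩ := exists_sigma (v := v) B hBQ b rfl horthB
  set T : CliffordAlgebra Q →ₗ[k] k :=
    (LinearMap.trace k (CliffordAlgebra Q)).comp
      (LinearMap.mul k (CliffordAlgebra Q)) with hT
  have hTapp : ∀ w, T w = LinearMap.trace k _ (LinearMap.mulLeft k w) := by
    intro w
    rw [hT, LinearMap.comp_apply, mulLeft_eq_mul]
  have hsig : ∀ a x y : CliffordAlgebra Q,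
      sigmaForm Q a x y = T (x * a * involute (reverse y)) := by
    intro a x y
    rw [sigmaForm, hTapp]
  have hmonT : ∀ (L : List (Fin (Module.finrank k H))) (i : Fin (Module.finrank k H)), Odd (L.count i) →
      T (mon Q v L) = 0 := by
    intro L i hodd
    have h1 : σ i (mon Q v L) = ((-1 : k) ^ L.count i) • mon Q v L :=
      sigma_mon (σ i) i (fun j => hσι i j) L
    have hcj := trace_conj_auto (σ i) (hσσ i) (mon Q v L)
    rw [← hTapp, ← hTapp, h1, map_smul, Odd.neg_one_pow hodd, smul_eq_mul,
      neg_one_mul] at hcj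
    exact add_self_eq_zero.mp (by linear_combination - hcj)
  have hT1 : T 1 = (Module.finrank k (CliffordAlgebra Q) : k) := by
    rw [hTapp, LinearMap.mulLeft_one, LinearMap.trace_id]
  have hTφ : ∀ w, T (involute (reverse w)) = T w := by
    intro w
    have hw : w ∈ Submodule.span k (Set.range fun S : Finset (Fin (Module.finrank k H)) =>
        mon Q v (S.sort (· ≤ ·))) := by rw [hspan]; trivial
    refine Submodule.span_induction ?_ ?_ ?_ ?_ hw
    · rintro x ⟨S, rfl⟩
      simp only []
      rcases S.eq_empty_or_nonempty with rfl | ⟨i, hi⟩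
      · simp [reverse.map_one]
      · have hnd : (S.sort (· ≤ ·)).Nodup := S.sort_nodup _
        have hcount : (S.sort (· ≤ ·)).count i = 1 :=
          List.count_eq_one_of_mem hnd (Finset.mem_sort _ |>.mpr hi)
        have h0 : T (mon Q v (S.sort (· ≤ ·))) = 0 :=
          hmonT _ i (by rw [hcount]; exact odd_one)
        rcases phi_mon ho _ hnd with h | h <;> rw [h] <;> simp [h0]
    · simp
    · intro u w _ _ hu hw'; simp [map_add, hu, hw']
    · intro c u _ hu; simp [map_smul, hu]
  have hφmul : ∀ u w : CliffordAlgebra Q,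
      involute (reverse (u * w)) = involute (reverse w) * involute (reverse u) := by
    intro u w
    rw [reverse.map_mul, map_mul]
  have hφφ : ∀ w : CliffordAlgebra Q, involute (reverse (involute (reverse w))) = w := by
    intro w
    rw [reverse_involute, involute_involute, reverse_reverse]
  set a := ι Q e₁ * ι Q e₂ with ha
  have hanti : ι Q e₂ * ι Q e₁ = -(ι Q e₁ * ι Q e₂) := by
    have hp : QuadraticMap.polar Q e₂ e₁ = 0 := by
      rw [hpolar, hBsymm e₂ e₁, h12, add_zero]
    have := ι_mul_ι_add_swap (Q := Q) e₂ e₁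
    rw [hp, map_zero] at this
    exact eq_neg_of_add_eq_zero_left this
  have hφa : involute (reverse a) = -a := by
    rw [ha, hφmul]
    simp only [reverse_ι, involute_ι, neg_mul_neg]
    rw [hanti]
  constructor
  · intro x y
    rw [hsig, hsig]
    have e1 : involute (reverse (y * a * involute (reverse x))) =
        -(x * a * involute (reverse y)) := by
      rw [hφmul, hφφ, hφmul, hφa]
      simp [mul_assoc]
    have h := hTφ (y * a * involute (reverse x))
    rw [e1, map_neg] at h
    linear_combination - h
  · intro x hx
    haveI : Nontrivial (CliffordAlgebra Q) := nontrivial_of_ne x 0 hx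
    have hNk : (Module.finrank k (CliffordAlgebra Q) : k) ≠ 0 :=
      Nat.cast_ne_zero.mpr (Module.finrank_pos).ne'
    have haa : a * a = algebraMap k _ (-(Q e₁ * Q e₂)) := by
      rw [ha]
      calc ι Q e₁ * ι Q e₂ * (ι Q e₁ * ι Q e₂)
          = ι Q e₁ * (ι Q e₂ * ι Q e₁) * ι Q e₂ := by
            simp [mul_assoc]
        _ = -(ι Q e₁ * ι Q e₁ * (ι Q e₂ * ι Q e₂)) := by
            rw [hanti]
            simp only [mul_neg, neg_mul, mul_assoc]
        _ = algebraMap k _ (-(Q e₁ * Q e₂)) := by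
            rw [ι_sq_scalar, ι_sq_scalar, ← map_mul, ← map_neg]
    have hu : x * a ≠ 0 := by
      intro h
      have h3 : x * (a * a) = 0 := by rw [← mul_assoc, h, zero_mul]
      rw [haa, ← Algebra.commutes, ← Algebra.smul_def] at h3
      rcases smul_eq_zero.mp h3 with h4 | h4
      · exact (neg_ne_zero.mpr (mul_ne_zero h1 h2)) h4
      · exact hx h4
    have hmem : x * a ∈ Submodule.span k (Set.range fun S : Finset (Fin (Module.finrank k H)) =>
        mon Q v (S.sort (· ≤ ·))) := by rw [hspan]; trivial
    obtain ⟨r, hr⟩ := Submodule.mem_span_range_iff_exists_fun k |>.mp hmem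
    have hex : ∃ S₀, r S₀ ≠ 0 := by
      by_contra hno
      push_neg at hno
      exact hu (by rw [← hr]; simp [hno])
    obtain ⟨S₀, hS₀⟩ := hex
    set z := mon Q v (S₀.sort (· ≤ ·)) with hz
    obtain ⟨c, hc0, hcz⟩ := mon_mul_self ho hQv (S₀.sort (· ≤ ·)) (S₀.sort_nodup _)
    refine ⟨involute (reverse z), ?_⟩
    rw [hsig, hφφ]
    have hxz : x * a * z = ∑ S : Finset (Fin (Module.finrank k H)), r S • (mon Q v (S.sort (· ≤ ·)) * z) := by
      rw [← hr, Finset.sum_mul]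
      exact Finset.sum_congr rfl fun S _ => (smul_mul_assoc _ _ _)
    rw [hxz, map_sum]
    have hterm : ∀ S ∈ Finset.univ, S ≠ S₀ →
        T (r S • (mon Q v (S.sort (· ≤ ·)) * z)) = 0 := by
      intro S _ hS
      rw [map_smul]
      have hSS : ¬ (∀ i, i ∈ S ↔ i ∈ S₀) := fun h => hS (Finset.ext h)
      push_neg at hSS
      obtain ⟨i, hi⟩ := hSS
      have hcnt : ∀ (U : Finset (Fin (Module.finrank k H))), (U.sort (· ≤ ·)).count i =
          if i ∈ U then 1 else 0 := by
        intro U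
        by_cases hiU : i ∈ U
        · rw [if_pos hiU]
          exact List.count_eq_one_of_mem (U.sort_nodup _) ((Finset.mem_sort _).mpr hiU)
        · rw [if_neg hiU]
          exact List.count_eq_zero.mpr fun h => hiU ((Finset.mem_sort _).mp h)
      have hodd : Odd (((S.sort (· ≤ ·)) ++ (S₀.sort (· ≤ ·))).count i) := by
        rw [List.count_append, hcnt, hcnt]
        rcases hi with ⟨hiS, hiS₀⟩ | ⟨hiS, hiS₀⟩ <;>
          simp [hiS, hiS₀, Nat.odd_iff]
      rw [hz, ← mon_append, hmonT _ i hodd, smul_eq_mul, mul_zero]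
    rw [Finset.sum_eq_single_of_mem S₀ (Finset.mem_univ _) hterm, map_smul, ← hz, hcz,
      Algebra.algebraMap_eq_smul_one, map_smul, hT1]
    simp only [smul_eq_mul]
    exact mul_ne_zero hS₀ (mul_ne_zero hc0 hNk)
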